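/- arXiv:2605.18000 — 5 statements merged into one kernel-verified Lean document; each statement's English description precedes it below -/
import Mathlib

section
/- Let A be the real Gelfand order and J its Jacobson radical. Then A/J is isomorphic as an ℝ-algebra to ℂ × ℝ. -/
open PowerSeries

noncomputable abbrev cc : PowerSeries ℝ → ℝ := constantCoeff (R := ℝ)

noncomputable def gelfandS : Subalgebra ℝ (Matrix (Fin 3) (Fin 3) (PowerSeries ℝ)) where
  carrier := {a | constantCoeff (R := ℝ) (a 0 2) = 0 ∧ constantCoeff (R := ℝ) (a 1 2) = 0 ∧
             constantCoeff (R := ℝ) (a 0 0) = constantCoeff (R := ℝ) (a 1 1) ∧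
             constantCoeff (R := ℝ) (a 1 0) = -constantCoeff (R := ℝ) (a 0 1)}
  mul_mem' := by
    rintro a b ⟨h1, h2, h3, h4⟩ ⟨k1, k2, k3, k4⟩
    simp only [Set.mem_setOf_eq, Matrix.mul_apply, Fin.sum_univ_three, map_add, map_mul] at *
    rw [h1, h2, h3, h4, k1, k2, k3, k4]
    refine ⟨by ring, by ring, by ring, by ring⟩
  add_mem' := by
    rintro a b ⟨h1, h2, h3, h4⟩ ⟨k1, k2, k3, k4⟩
    simp only [Set.mem_setOf_eq, Matrix.add_apply, map_add] at *
    rw [h1, h2, h3, h4, k1, k2, k3, k4]; refine ⟨by ring, by ring, by ring, by ring⟩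
  algebraMap_mem' := by
    intro r
    simp [Matrix.algebraMap_eq_diagonal, Matrix.diagonal_apply]

noncomputable def gelfandπ : gelfandS →ₐ[ℝ] (ℂ × ℝ) where
  toFun x := (⟨cc ((x : Matrix (Fin 3) (Fin 3) (PowerSeries ℝ)) 0 0),
               cc ((x : Matrix (Fin 3) (Fin 3) (PowerSeries ℝ)) 0 1)⟩,
              cc ((x : Matrix (Fin 3) (Fin 3) (PowerSeries ℝ)) 2 2))
  map_one' := by
    refine Prod.ext (Complex.ext ?_ ?_) ?_ <;>
      simp [Matrix.one_apply]
  map_mul' := by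
    intro x y
    obtain ⟨h1, h2, h3, h4⟩ := x.2
    obtain ⟨k1, k2, k3, k4⟩ := y.2
    refine Prod.ext (Complex.ext ?_ ?_) ?_ <;>
      simp only [Subalgebra.coe_mul, Matrix.mul_apply, Fin.sum_univ_three, map_add, map_mul,
        Prod.fst_mul, Prod.snd_mul, Complex.mul_re, Complex.mul_im, cc] at * <;>
      simp only [h1, h2, ← h3, h4, k1, k2, ← k3, k4] <;> ring
  map_zero' := by
    refine Prod.ext (Complex.ext ?_ ?_) ?_ <;> simp [cc]
  map_add' := by
    intro x y
    refine Prod.ext (Complex.ext ?_ ?_) ?_ <;>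
      simp [cc, Matrix.add_apply]
  commutes' := by
    intro r
    refine Prod.ext (Complex.ext ?_ ?_) ?_ <;>
      simp [cc, Matrix.algebraMap_eq_diagonal, Matrix.diagonal_apply, Prod.algebraMap_apply,
        ← PowerSeries.C_eq_algebraMap, Complex.ofReal_re, Complex.ofReal_im]

/-- `A/J ≅ ℂ × ℝ`, where `A ⊆ M₃(ℝ[[t]])` is the real Gelfand order
(matrices with `a₁₃, a₂₃ ∈ (t)` and constant terms satisfying `a̅₁₁ = a̅₂₂`,
`a̅₂₁ = -a̅₁₂`) and `J` is its Jacobson radical (those elements of `A` whose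
constant terms in the upper-left `2×2` block and in position `(3,3)` vanish):
there is a surjective `ℝ`-algebra homomorphism `A → ℂ × ℝ` with kernel `J`. -/
theorem stmt8 :
    ∃ S : Subalgebra ℝ (Matrix (Fin 3) (Fin 3) (PowerSeries ℝ)),
      (S : Set (Matrix (Fin 3) (Fin 3) (PowerSeries ℝ))) =
        {a | constantCoeff (R := ℝ) (a 0 2) = 0 ∧ constantCoeff (R := ℝ) (a 1 2) = 0 ∧
             constantCoeff (R := ℝ) (a 0 0) = constantCoeff (R := ℝ) (a 1 1) ∧
             constantCoeff (R := ℝ) (a 1 0) = -constantCoeff (R := ℝ) (a 0 1)} ∧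
      ∃ π : S →ₐ[ℝ] (ℂ × ℝ),
        Function.Surjective π ∧
        ∀ x : S, π x = 0 ↔
          (constantCoeff (R := ℝ) ((x : Matrix (Fin 3) (Fin 3) (PowerSeries ℝ)) 0 0) = 0 ∧
           constantCoeff (R := ℝ) ((x : Matrix (Fin 3) (Fin 3) (PowerSeries ℝ)) 0 1) = 0 ∧
           constantCoeff (R := ℝ) ((x : Matrix (Fin 3) (Fin 3) (PowerSeries ℝ)) 1 0) = 0 ∧
           constantCoeff (R := ℝ) ((x : Matrix (Fin 3) (Fin 3) (PowerSeries ℝ)) 1 1) = 0 ∧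
           constantCoeff (R := ℝ) ((x : Matrix (Fin 3) (Fin 3) (PowerSeries ℝ)) 2 2) = 0) := by
  refine ⟨gelfandS, rfl, gelfandπ, ?_, ?_⟩
  · rintro ⟨z, r⟩
    refine ⟨⟨!![PowerSeries.C (R := ℝ) z.re, PowerSeries.C (R := ℝ) z.im, 0;
                -PowerSeries.C (R := ℝ) z.im, PowerSeries.C (R := ℝ) z.re, 0;
                0, 0, PowerSeries.C (R := ℝ) r], ?_⟩, ?_⟩
    · refine ⟨?_, ?_, ?_, ?_⟩ <;> simp
    · refine Prod.ext (Complex.ext ?_ ?_) ?_ <;> simp [gelfandπ, cc]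
  · intro x
    obtain ⟨h1, h2, h3, h4⟩ := x.2
    constructor
    · intro h
      have hre := congrArg (fun p => p.1.re) h
      have him := congrArg (fun p => p.1.im) h
      have h2' := congrArg (fun p => p.2) h
      simp [gelfandπ, cc] at hre him h2'
      exact ⟨hre, him, by rw [h4, him]; ring, by rw [← h3]; exact hre, h2'⟩
    · rintro ⟨a1, a2, a3, a4, a5⟩
      refine Prod.ext (Complex.ext ?_ ?_) ?_ <;> simp [gelfandπ, cc, a1, a2, a5]
end

section
/- Let c ∈ ℝ, d ∈ ℝ*, λ ∈ ℝ*. There exist matrices η, ξ in C = {[[α,-β],[β,α]] : α,β ∈ ℝ} such that η · [[1,0],[c,d]] · ξ = [[1,0],[0,λ]] if and only if λ² - ((d² + c² + 1)/d)·λ + 1 = 0. -/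
set_option maxHeartbeats 800000

open Matrix

theorem stmt11 (c d lam : ℝ) (hd : d ≠ 0) (hlam : lam ≠ 0) :
    (∃ η ξ : Matrix (Fin 2) (Fin 2) ℝ,
        (∃ α β : ℝ, η = !![α, -β; β, α]) ∧ (∃ α β : ℝ, ξ = !![α, -β; β, α]) ∧
        η * !![1, 0; c, d] * ξ = !![1, 0; 0, lam]) ↔
      lam ^ 2 - ((d ^ 2 + c ^ 2 + 1) / d) * lam + 1 = 0 := by
  constructor
  · rintro ⟨η, ξ, ⟨a, b, rfl⟩, ⟨p, q, rfl⟩, h⟩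
    rw [show (!![a, -b; b, a] : Matrix (Fin 2) (Fin 2) ℝ) * !![1, 0; c, d] * !![p, -q; q, p]
        = !![(a - b*c)*p - b*d*q, -((a-b*c)*q) - b*d*p;
             (b + a*c)*p + a*d*q, -((b+a*c)*q) + a*d*p] from by
      simp [Matrix.mul_fin_two]; ring_nf; simp] at h
    rw [← Matrix.ext_iff] at h
    have h00 := h 0 0
    have h01 := h 0 1
    have h10 := h 1 0
    have h11 := h 1 1
    simp at h00 h01 h10 h11
    have hN : (p^2+q^2)*((a-b*c)^2+(b*d)^2) = 1 := by
      linear_combination ((a - b*c)*p - b*d*q + 1)*h00 + (-((a - b*c)*q) - b*d*p)*h01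
    have hpq : p^2 + q^2 ≠ 0 := by
      intro h0
      rw [h0] at hN; simp at hN
    have e1 : p*(b + a*c - lam*(b*d)) - q*(lam*(a-b*c) - a*d) = 0 := by
      linear_combination h10 + lam*h01
    have e2 : p*(lam*(a-b*c) - a*d) + q*(b + a*c - lam*(b*d)) = 0 := by
      linear_combination lam*h00 - h11
    have hx : (b + a*c - lam*(b*d)) * (p^2+q^2) = 0 := by
      linear_combination p*e1 + q*e2
    have hy : (lam*(a-b*c) - a*d) * (p^2+q^2) = 0 := by
      linear_combination p*e2 - q*e1
    have hx' : b + a*c - lam*(b*d) = 0 := (mul_eq_zero.mp hx).resolve_right hpq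
    have hy' : lam*(a-b*c) - a*d = 0 := (mul_eq_zero.mp hy).resolve_right hpq
    have hab : a^2 + b^2 ≠ 0 := by
      intro h0
      have ha : a = 0 := by nlinarith [sq_nonneg a, sq_nonneg b]
      have hb : b = 0 := by nlinarith [sq_nonneg a, sq_nonneg b]
      rw [ha, hb] at h00; simp at h00
    have hK : (d*lam^2 - (d^2+c^2+1)*lam + d) * (a^2+b^2) = 0 := by
      linear_combination (a*(lam*d-1) + b*c)*hy' + (-(a*lam*c) - b*(lam-d))*hx'
    have hK0 : d*lam^2 - (d^2+c^2+1)*lam + d = 0 := (mul_eq_zero.mp hK).resolve_right hab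
    field_simp
    linear_combination hK0
  · intro hk
    have hK0 : d*lam^2 - (d^2+c^2+1)*lam + d = 0 := by
      field_simp at hk
      linear_combination hk
    by_cases hcl : c = 0 ∧ lam = d
    · obtain ⟨hc, hl⟩ := hcl
      subst hc hl
      refine ⟨!![1, -0; 0, 1], !![1, -0; 0, 1], ⟨1, 0, rfl⟩, ⟨1, 0, rfl⟩, ?_⟩
      simp [Matrix.mul_fin_two]
    · have hpos : c^2 + (lam-d)^2 > 0 := by
        rcases not_and_or.mp hcl with hc | hl
        · have : c^2 > 0 := by positivity
          nlinarith [sq_nonneg (lam - d)]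
        · have hne : lam - d ≠ 0 := sub_ne_zero.mpr hl
          have : (lam-d)^2 > 0 := by positivity
          nlinarith [sq_nonneg c]
      set N : ℝ := d^2*(c^2+(lam-d)^2) with hNdef
      have hNne : N ≠ 0 := by rw [hNdef]; exact mul_ne_zero (pow_ne_zero 2 hd) (ne_of_gt hpos)
      refine ⟨!![lam*c, -(lam-d); lam-d, lam*c], !![d*c/N, -(-(d*(lam-d))/N); -(d*(lam-d))/N, d*c/N],
        ⟨lam*c, lam-d, rfl⟩, ⟨d*c/N, -(d*(lam-d))/N, rfl⟩, ?_⟩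
      rw [show (!![lam*c, -(lam-d); lam-d, lam*c] : Matrix (Fin 2) (Fin 2) ℝ) * !![1, 0; c, d] =
          !![lam*c - (lam-d)*c, -((lam-d)*d); lam-d + lam*c*c, lam*c*d] from by
        simp [Matrix.mul_fin_two]; ring_nf; simp]
      rw [← Matrix.ext_iff]
      intro i j
      fin_cases i <;> fin_cases j <;>
        simp only [Matrix.mul_apply, Matrix.of_apply, Fin.sum_univ_two, Matrix.cons_val', Matrix.cons_val_zero,
          Matrix.cons_val_one, Matrix.head_cons, Matrix.head_fin_const, Matrix.empty_val',
          Matrix.cons_val_fin_one, Fin.isValue, Fin.mk_zero, Fin.mk_one]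
      · field_simp
        ring
      · field_simp
        ring
      · field_simp
        linear_combination (-(d*c))*hK0
      · field_simp
        linear_combination (-(d*(lam-d)))*hK0
end

section
/- For any c ∈ ℝ and d ∈ ℝ*, the polynomial v² - ((d² + c² + 1)/d)·v + 1 has a real root; equivalently, for every matrix [[1,0],[c,d]] with d ≠ 0 there exist η, ξ ∈ C and λ ∈ ℝ* with η·[[1,0],[c,d]]·ξ = diag(1, λ). -/
open Matrix

set_option maxHeartbeats 1000000 in
theorem stmt12 (c d : ℝ) (hd : d ≠ 0) :
    (∃ lam : ℝ, lam ^ 2 - ((d ^ 2 + c ^ 2 + 1) / d) * lam + 1 = 0) ∧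
    (∃ (η ξ : Matrix (Fin 2) (Fin 2) ℝ) (lam : ℝ), lam ≠ 0 ∧
        (∃ α β : ℝ, η = !![α, -β; β, α]) ∧ (∃ α β : ℝ, ξ = !![α, -β; β, α]) ∧
        η * !![1, 0; c, d] * ξ = !![1, 0; 0, lam]) := by
  set s : ℝ := (d ^ 2 + c ^ 2 + 1) / d with hs
  have hdisc : s ^ 2 - 4 ≥ 0 := by
    have h1 : s ^ 2 - 4 = (((d-1)^2 + c^2) * ((d+1)^2 + c^2)) / d^2 := by
      rw [hs]; field_simp; ring
    rw [h1]
    positivity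
  set lam : ℝ := (s + Real.sqrt (s ^ 2 - 4)) / 2 with hlam
  have hsq : Real.sqrt (s ^ 2 - 4) ^ 2 = s ^ 2 - 4 := Real.sq_sqrt hdisc
  have hroot : lam ^ 2 - s * lam + 1 = 0 := by
    rw [hlam]; nlinarith [hsq]
  have hlamne : lam ≠ 0 := by
    intro h
    rw [h] at hroot
    norm_num at hroot
  refine ⟨⟨lam, hroot⟩, ?_⟩
  by_cases hc : c = 0
  · -- A = diag(1,d): take η = ξ = I, lam' = d
    refine ⟨!![1, -0; 0, 1], !![1, -0; 0, 1], d, hd, ⟨1, 0, rfl⟩, ⟨1, 0, rfl⟩, ?_⟩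
    subst hc
    ext i j
    fin_cases i <;> fin_cases j <;>
      simp [Matrix.mul_apply, Fin.sum_univ_succ]
  · set q : ℝ := (d - lam) / c with hq
    set v : ℝ := c + d * q with hv
    set w : ℝ := 1 + v ^ 2 with hw
    have hwne : w ≠ 0 := by positivity
    -- key relation: q = lam * v
    have hkey : q * (1 - lam * d) = lam * c := by
      have : (d - lam) * (1 - lam * d) = lam * c ^ 2 := by
        have h2 : lam ^ 2 * d - lam * (d ^ 2 + c ^ 2 + 1) + d = 0 := by
          have := hroot
          rw [hs] at this
          field_simp at this
          linarith [this]
        nlinarith [h2]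
      rw [hq]
      field_simp
      linarith [this]
    have hqlv : q = lam * v := by
      rw [hv]
      have : q - lam * d * q = lam * c := by linarith [hkey]; 
      nlinarith [this]
    have hdcq : d - c * q = lam := by
      rw [hq]; field_simp; ring
    clear_value lam q v w
    refine ⟨!![1/w, -(- v/w); -v/w, 1/w], !![1, -q; q, 1], lam, hlamne,
      ⟨1/w, -v/w, rfl⟩, ⟨1, q, rfl⟩, ?_⟩
    ext i j
    fin_cases i <;> fin_cases j
    · simp [Matrix.mul_apply, Fin.sum_univ_succ]; field_simp
      linear_combination -hw - v * hv
    · simp [Matrix.mul_apply, Fin.sum_univ_succ]; field_simp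
      linear_combination v * hdcq - hqlv
    · simp [Matrix.mul_apply, Fin.sum_univ_succ]; field_simp
      linear_combination -hv
    · simp [Matrix.mul_apply, Fin.sum_univ_succ]; field_simp
      linear_combination hdcq + v * hqlv - lam * hw
end

section
/- For λ, λ' ∈ ℝ* and k ∈ ℕ, the matrices tᵏ·diag(1, λ) and tᵏ·diag(1, λ') over ℝ[[t]] are equivalent under left and right multiplication by units of End_A(P) (equivalently under the transformations of the matrix problem with coefficients in C plus matrices over (t)) if and only if λ' = λ or λ' = λ⁻¹. -/
open Matrix PowerSeries

/-- Membership in `End_A(P) = C ∔ M₂((t))`: a matrix over `ℝ[[t]]` whose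
constant-term matrix lies in `C = {[[α,-β],[β,α]]}`. -/
def inEndP (φ : Matrix (Fin 2) (Fin 2) (PowerSeries ℝ)) : Prop :=
  ∃ α β : ℝ, φ.map constantCoeff = !![α, -β; β, α]

lemma diag_two {R : Type*} [Zero R] (x y : R) :
    Matrix.diagonal ![x, y] = !![x, 0; 0, y] := by
  apply Matrix.ext
  intro i j
  fin_cases i <;> fin_cases j <;> simp [Matrix.diagonal]

theorem stmt13 (k : ℕ) (lam lam' : ℝ) (hlam : lam ≠ 0) (hlam' : lam' ≠ 0) :
    (∃ η ξ η' ξ' : Matrix (Fin 2) (Fin 2) (PowerSeries ℝ),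
        inEndP η ∧ inEndP ξ ∧ inEndP η' ∧ inEndP ξ' ∧
        η * η' = 1 ∧ η' * η = 1 ∧ ξ * ξ' = 1 ∧ ξ' * ξ = 1 ∧
        η * ((PowerSeries.X : PowerSeries ℝ) ^ k •
              Matrix.diagonal ![1, PowerSeries.C lam]) * ξ =
          (PowerSeries.X : PowerSeries ℝ) ^ k •
            Matrix.diagonal ![1, PowerSeries.C lam']) ↔
      (lam' = lam ∨ lam' = lam⁻¹) := by
  constructor
  · rintro ⟨η, ξ, η', ξ', ⟨a, b, hη⟩, ⟨c, d, hξ⟩, -, -, -, -, -, -, hmain⟩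
    have hX : (PowerSeries.X : PowerSeries ℝ) ^ k ≠ 0 :=
      pow_ne_zero _ PowerSeries.X_ne_zero
    have h1 : (PowerSeries.X : PowerSeries ℝ) ^ k •
        (η * Matrix.diagonal ![1, PowerSeries.C lam] * ξ) =
        (PowerSeries.X : PowerSeries ℝ) ^ k •
        Matrix.diagonal ![1, PowerSeries.C lam'] := by
      rw [← hmain]; rw [Matrix.mul_smul, Matrix.smul_mul]
    have h2 : η * Matrix.diagonal ![1, PowerSeries.C lam] * ξ =
        Matrix.diagonal ![1, PowerSeries.C lam'] := by
      apply Matrix.ext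
      intro i j
      have h := congrFun (congrFun h1 i) j
      simp only [Matrix.smul_apply, smul_eq_mul] at h
      exact mul_left_cancel₀ hX h
    have h3 : (η.map (constantCoeff)) *
        ((Matrix.diagonal ![1, PowerSeries.C lam]).map (constantCoeff)) *
        (ξ.map (constantCoeff)) =
        (Matrix.diagonal ![1, PowerSeries.C lam']).map (constantCoeff) := by
      rw [← Matrix.map_mul, ← Matrix.map_mul, h2]
    have hdmap : ∀ μ : ℝ, (Matrix.diagonal ![1, PowerSeries.C μ]).map (constantCoeff)
        = !![(1 : ℝ), 0; 0, μ] := by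
      intro μ
      rw [diag_two]
      apply Matrix.ext
      intro i j
      fin_cases i <;> fin_cases j <;> simp
    rw [hdmap, hdmap, hη, hξ] at h3
    have e00 := congrFun (congrFun h3 0) 0
    have e01 := congrFun (congrFun h3 0) 1
    have e10 := congrFun (congrFun h3 1) 0
    have e11 := congrFun (congrFun h3 1) 1
    simp [Matrix.mul_apply, Fin.sum_univ_two] at e00 e01 e10 e11
    have key : (lam' - lam) * (lam * lam' - 1) = 0 := by
      have hA : lam' - lam = (lam ^ 2 - 1) * (b * d) := by linear_combination lam * e00 - e11
      have hB : lam * lam' - 1 = (lam ^ 2 - 1) * (a * c) := by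
        linear_combination e00 - lam * e11
      have hC : (1 - lam ^ 2) * (b * c) = 0 := by linear_combination e10 + lam * e01
      rw [hA, hB]
      linear_combination (-(lam ^ 2 - 1) * (a * d)) * hC
    rcases mul_eq_zero.1 key with h | h
    · left; linarith [sub_eq_zero.1 h]
    · right
      have : lam * lam' = 1 := by linarith
      field_simp
      linarith
  · have hone : inEndP 1 := by
      refine ⟨1, 0, ?_⟩
      rw [Matrix.map_one _ (map_zero _) (map_one _), Matrix.one_fin_two]
      norm_num
    rintro (rfl | rfl)
    · exact ⟨1, 1, 1, 1, hone, hone, hone, hone,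
        by simp, by simp, by simp, by simp, by simp⟩
    · have hcmap : ∀ μ : ℝ,
          (!![0, -PowerSeries.C μ; PowerSeries.C μ, 0]).map (constantCoeff)
            = !![(0:ℝ), -μ; μ, 0] := by
        intro μ
        apply Matrix.ext
        intro i j
        fin_cases i <;> fin_cases j <;> simp
      have hJ : ∀ μ ν : ℝ, (!![0, -PowerSeries.C μ; PowerSeries.C μ, 0] :
          Matrix (Fin 2) (Fin 2) (PowerSeries ℝ)) *
          !![0, -PowerSeries.C ν; PowerSeries.C ν, 0]
          = !![-(PowerSeries.C (μ * ν)), 0; 0, -(PowerSeries.C (μ * ν))] := by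
        intro μ ν
        rw [Matrix.mul_fin_two]
        apply Matrix.ext
        intro i j
        fin_cases i <;> fin_cases j <;> simp [← _root_.map_mul, mul_comm]
      refine ⟨!![0, -PowerSeries.C 1; PowerSeries.C 1, 0],
        !![0, -PowerSeries.C (-lam⁻¹); PowerSeries.C (-lam⁻¹), 0],
        !![0, -PowerSeries.C (-1); PowerSeries.C (-1), 0],
        !![0, -PowerSeries.C lam; PowerSeries.C lam, 0],
        ⟨0, 1, by rw [hcmap]⟩, ⟨0, -lam⁻¹, by rw [hcmap]⟩,
        ⟨0, -1, by rw [hcmap]⟩, ⟨0, lam, by rw [hcmap]⟩,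
        ?_, ?_, ?_, ?_, ?_⟩
      · rw [hJ]; norm_num; rw [Matrix.one_fin_two]
      · rw [hJ]; norm_num; rw [Matrix.one_fin_two]
      · rw [hJ]
        rw [Matrix.one_fin_two]
        norm_num [inv_mul_cancel₀ hlam]
      · rw [hJ]
        rw [Matrix.one_fin_two]
        norm_num [mul_inv_cancel₀ hlam]
      · rw [Matrix.mul_smul, Matrix.smul_mul]
        congr 1
        rw [diag_two, diag_two, Matrix.mul_fin_two]
        apply Matrix.ext
        intro i j
        fin_cases i <;> fin_cases j <;>
          simp [← _root_.map_mul, mul_inv_cancel₀ hlam, inv_mul_cancel₀ hlam]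
end

section
/- Let k ⊆ k' be a finite Galois extension of degree t with Galois group G. Then the crossed product algebra k'[G] (the twisted group algebra with multiplication a[f]·b[g] = a·f(b)[fg]) is isomorphic as a k-algebra to the matrix algebra M_t(k). -/
open scoped Classical

section Aux

variable (k k' : Type) [Field k] [Field k'] [Algebra k k']
    [FiniteDimensional k k'] [IsGalois k k']

noncomputable def Phi16 : ((k' ≃ₐ[k] k') → k') →ₗ[k] (k' →ₗ[k] k') where
  toFun F := ∑ f : k' ≃ₐ[k] k', (LinearMap.mulLeft k (F f)) ∘ₗ f.toLinearMap
  map_add' F G := by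
    ext x
    simp [LinearMap.sum_apply, add_mul, Finset.sum_add_distrib]
  map_smul' c F := by
    ext x
    simp [LinearMap.sum_apply, Finset.mul_sum, Algebra.smul_def, mul_assoc]

omit [IsGalois k k'] in
theorem Phi16_apply (F : (k' ≃ₐ[k] k') → k') (x : k') :
    Phi16 k k' F x = ∑ f : k' ≃ₐ[k] k', F f * f x := by
  simp [Phi16, LinearMap.sum_apply, LinearMap.mulLeft_apply]

theorem Phi16_injective : Function.Injective (Phi16 k k') := by
  rw [injective_iff_map_eq_zero]
  intro F hF
  have hli : LinearIndependent k' (fun f : k' ≃ₐ[k] k' => (f : k' → k')) := by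
    refine (linearIndependent_monoidHom k' k').comp
      (fun f : k' ≃ₐ[k] k' => (f : k' →* k')) ?_
    intro f g hfg
    ext x
    exact DFunLike.congr_fun hfg x
  have h0 : ∑ f : k' ≃ₐ[k] k', F f • (fun x => f x : k' → k') = 0 := by
    funext x
    have := congrArg (fun (L : k' →ₗ[k] k') => L x) hF
    simp only [Phi16_apply, LinearMap.zero_apply] at this
    simpa [Finset.sum_apply] using this
  have := linearIndependent_iff''.mp hli Finset.univ F (by simp) h0
  funext f; exact this f

theorem Phi16_finrank_eq :
    Module.finrank k ((k' ≃ₐ[k] k') → k') = Module.finrank k (k' →ₗ[k] k') := by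
  rw [Module.finrank_pi_fintype, Module.finrank_linearMap]
  simp [IsGalois.card_aut_eq_finrank k k']
  exact Or.inl (by simpa [Nat.card_eq_fintype_card] using IsGalois.card_aut_eq_finrank k k')

end Aux

/-- For a finite Galois extension `k ⊆ k'` of degree `t` with Galois group `G`,
the crossed product `k'[G]` (realised as functions `G → k'` with convolution
`(F ⋆ H)(ρ) = ∑_{f·g = ρ} F(f)·f(H(g))` and unit supported at `1`) is
isomorphic as a `k`-algebra to `M_t(k)`. -/
theorem stmt16 (k k' : Type) [Field k] [Field k'] [Algebra k k']
    [FiniteDimensional k k'] [IsGalois k k'] :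
    ∃ e : ((k' ≃ₐ[k] k') → k') ≃ₗ[k]
        Matrix (Fin (Module.finrank k k')) (Fin (Module.finrank k k')) k,
      (∀ F H : (k' ≃ₐ[k] k') → k',
          e (fun ρ => ∑ f : k' ≃ₐ[k] k', F f * f (H (f⁻¹ * ρ))) = e F * e H) ∧
      e (fun ρ => if ρ = 1 then 1 else 0) = 1 := by
  set b := Module.finBasis k k'
  set Ψ := (Phi16 k k').linearEquivOfInjective (Phi16_injective k k') (Phi16_finrank_eq k k')
  set M := LinearMap.toMatrixAlgEquiv b
  refine ⟨Ψ.trans M.toLinearEquiv, ?_, ?_⟩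
  · intro F H
    have key : Phi16 k k' (fun ρ => ∑ f : k' ≃ₐ[k] k', F f * f (H (f⁻¹ * ρ)))
        = Phi16 k k' F * Phi16 k k' H := by
      ext x
      simp only [Module.End.mul_apply, Phi16_apply, Finset.sum_mul]
      rw [Finset.sum_comm]
      refine Finset.sum_congr rfl fun f _ => ?_
      rw [← Fintype.sum_equiv (Equiv.mulLeft f)
        (fun g => F f * f (H g) * f (g x))
        (fun ρ => F f * f (H (f⁻¹ * ρ)) * ρ x) (fun g => by
          simp [mul_assoc, AlgEquiv.mul_apply])]
      simp [Finset.mul_sum, map_mul, mul_assoc]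
    have hΨ : Ψ (fun ρ => ∑ f : k' ≃ₐ[k] k', F f * f (H (f⁻¹ * ρ))) = Ψ F * Ψ H := by
      exact key
    show M (Ψ _) = M (Ψ F) * M (Ψ H)
    rw [hΨ, map_mul]
  · have hone : Ψ (fun ρ => if ρ = 1 then (1 : k') else 0) = 1 := by
      show Phi16 k k' _ = 1
      ext x
      simp [Phi16_apply, Finset.sum_ite_eq']
    show M (Ψ _) = 1
    rw [hone, map_one]
end
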